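/- Let F : ℝⁿ → ℝⁿ be a polynomial map with F(0) = 0 and let G be its Segre extension. If F is bijective and j(F)(0) ≠ 0, then G is bijective, and for every y ∈ ℝⁿ and t ≠ 0 one has G⁻¹(y,t) = ((1/t) • F⁻¹(t • y), t). -/

import Mathlib

noncomputable section

/-- A map between real coordinate spaces is a polynomial map if each component is
given by evaluation of a real polynomial. -/
def IsPolynomialMap {ι κ : Type*} (F : (ι → ℝ) → (κ → ℝ)) : Prop :=
  ∃ p : κ → MvPolynomial ι ℝ, ∀ x i, F x i = MvPolynomial.eval x (p i)

/-- The Jacobian determinant j(F)(p) = det J(F)(p) of a map at a point. -/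
def jdet {E : Type*} [NormedAddCommGroup E] [NormedSpace ℝ E] (F : E → E) (p : E) : ℝ :=
  LinearMap.det (fderiv ℝ F p : E →ₗ[ℝ] E)

theorem IsPolynomialMap.differentiable {ι κ : Type*} [Fintype ι] [Fintype κ]
    {F : (ι → ℝ) → (κ → ℝ)} (hF : IsPolynomialMap F) : Differentiable ℝ F := by
  obtain ⟨p, hp⟩ := hF
  have hFe : F = fun x i => MvPolynomial.eval x (p i) :=
    funext fun x => funext fun i => hp x i
  rw [hFe]
  refine differentiable_pi.mpr fun i x => ?_
  exact ((AnalyticOnNhd.eval_mvPolynomial (p i)) x trivial).differentiableAt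

theorem snoc_continuous {n : ℕ} (x : Fin n → ℝ) :
    Continuous fun t : ℝ => (Fin.snoc x t : Fin (n + 1) → ℝ) := by
  refine continuous_pi fun i => ?_
  refine Fin.lastCases ?_ (fun j => ?_) i
  · simpa [Fin.snoc_last] using continuous_id'
  · simpa [Fin.snoc_castSucc] using continuous_const

/-- if F : ℝⁿ → ℝⁿ is a bijective polynomial map with F(0) = 0 and
j(F)(0) ≠ 0, then its Segre extension G(x,t) = (G₁(x,t), t) (where G₁ is the unique
polynomial map with t • G₁(x,t) = F(t • x)) is bijective, and for t ≠ 0,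
G⁻¹(y,t) = ((1/t) • F⁻¹(t • y), t).
(ℝⁿ × ℝ is modelled as Fin (n+1) → ℝ via Fin.snoc.) -/
theorem stmt6 (n : ℕ) (F : (Fin n → ℝ) → (Fin n → ℝ))
    (hF : IsPolynomialMap F) (h0 : F 0 = 0)
    (G₁ : (Fin (n + 1) → ℝ) → (Fin n → ℝ)) (hG₁ : IsPolynomialMap G₁)
    (hG₁F : ∀ v : Fin (n + 1) → ℝ,
      v (Fin.last n) • G₁ v = F (v (Fin.last n) • (v ∘ Fin.castSucc)))
    (G : (Fin (n + 1) → ℝ) → (Fin (n + 1) → ℝ))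
    (hG : ∀ v, G v = Fin.snoc (G₁ v) (v (Fin.last n)))
    (hbij : Function.Bijective F) (hj0 : jdet F 0 ≠ 0) :
    Function.Bijective G ∧
    ∀ (y : Fin n → ℝ) (t : ℝ), t ≠ 0 →
      Function.invFun G (Fin.snoc y t) =
        Fin.snoc (t⁻¹ • Function.invFun F (t • y)) t := by
  classical
  set L : (Fin n → ℝ) →L[ℝ] (Fin n → ℝ) := fderiv ℝ F 0 with hL
  -- hG₁F specialized to snoc
  have hsnoc : ∀ (x : Fin n → ℝ) (t : ℝ),
      t • G₁ (Fin.snoc x t) = F (t • x) := by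
    intro x t
    have := hG₁F (Fin.snoc x t)
    simpa [Fin.snoc_last, Fin.snoc_comp_castSucc] using this
  have hG1ne : ∀ (x : Fin n → ℝ) (t : ℝ), t ≠ 0 →
      G₁ (Fin.snoc x t) = t⁻¹ • F (t • x) := by
    intro x t ht
    have := hsnoc x t
    calc G₁ (Fin.snoc x t) = t⁻¹ • (t • G₁ (Fin.snoc x t)) := by
          rw [smul_smul, inv_mul_cancel₀ ht, one_smul]
      _ = t⁻¹ • F (t • x) := by rw [this]
  -- G₁ at t = 0 is the derivative of F at 0
  have hkey : ∀ x : Fin n → ℝ, G₁ (Fin.snoc x 0) = L x := by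
    intro x
    have hc : Continuous G₁ := hG₁.differentiable.continuous
    have h1 : Filter.Tendsto (fun t : ℝ => G₁ (Fin.snoc x t)) (nhdsWithin 0 {0}ᶜ)
        (nhds (G₁ (Fin.snoc x 0))) :=
      ((hc.comp (snoc_continuous x)).tendsto 0).mono_left nhdsWithin_le_nhds
    -- derivative of t ↦ F (t • x) at 0 is L x
    have hdF : HasFDerivAt F L 0 := (hF.differentiable 0).hasFDerivAt
    have hc' : HasDerivAt (fun t : ℝ => t • x) x 0 := by
      simpa using (hasDerivAt_id (0 : ℝ)).smul_const x
    have hdF' : HasFDerivAt F L ((fun t : ℝ => t • x) 0) := by simpa using hdF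
    have hg : HasDerivAt (fun t : ℝ => F (t • x)) (L x) 0 := by
      have := hdF'.comp_hasDerivAt 0 hc'
      simpa [Function.comp_def] using this
    have h2 : Filter.Tendsto (slope (fun t : ℝ => F (t • x)) 0) (nhdsWithin 0 {0}ᶜ)
        (nhds (L x)) := hasDerivAt_iff_tendsto_slope.mp hg
    have heq : ∀ t : ℝ, t ≠ 0 →
        slope (fun t : ℝ => F (t • x)) 0 t = G₁ (Fin.snoc x t) := by
      intro t ht
      rw [hG1ne x t ht]
      simp [slope, h0]
    have h2' : Filter.Tendsto (fun t : ℝ => G₁ (Fin.snoc x t)) (nhdsWithin 0 {0}ᶜ)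
        (nhds (L x)) := by
      refine h2.congr' ?_
      filter_upwards [self_mem_nhdsWithin] with t ht
      exact heq t ht
    exact tendsto_nhds_unique h1 h2'
  -- L is a linear equivalence
  have hdet : LinearMap.det (L : (Fin n → ℝ) →ₗ[ℝ] (Fin n → ℝ)) ≠ 0 := hj0
  set e : (Fin n → ℝ) ≃ₗ[ℝ] (Fin n → ℝ) :=
    LinearMap.equivOfDetNeZero (L : (Fin n → ℝ) →ₗ[ℝ] (Fin n → ℝ)) hdet with he
  have heL : ∀ x, e x = L x := fun x => rfl
  -- explicit inverse
  set Finv := Function.invFun F with hFinv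
  have hFr : ∀ y, F (Finv y) = y := fun y => Function.invFun_eq (hbij.2 y)
  have hFl : ∀ x, Finv (F x) = x := fun x => Function.leftInverse_invFun hbij.1 x
  set H : (Fin (n + 1) → ℝ) → (Fin (n + 1) → ℝ) := fun v =>
    Fin.snoc (if v (Fin.last n) = 0 then e.symm (v ∘ Fin.castSucc)
      else (v (Fin.last n))⁻¹ • Finv (v (Fin.last n) • (v ∘ Fin.castSucc)))
      (v (Fin.last n)) with hH
  have hGsnoc : ∀ (x : Fin n → ℝ) (t : ℝ),
      G (Fin.snoc x t) = Fin.snoc (G₁ (Fin.snoc x t)) t := by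
    intro x t; rw [hG]; simp [Fin.snoc_last]
  have hvsnoc : ∀ v : Fin (n + 1) → ℝ,
      (Fin.snoc (v ∘ Fin.castSucc) (v (Fin.last n)) : Fin (n + 1) → ℝ) = v := by
    intro v
    have := Fin.snoc_init_self v
    simpa [Fin.init_def, Function.comp_def] using this
  have hHsnoc : ∀ (y : Fin n → ℝ) (t : ℝ),
      H (Fin.snoc y t) = Fin.snoc (if t = 0 then e.symm y
        else t⁻¹ • Finv (t • y)) t := by
    intro y t
    rw [hH]
    simp [Fin.snoc_last, Fin.snoc_comp_castSucc]
  -- G (H v) = v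
  have hGH' : ∀ (y : Fin n → ℝ) (t : ℝ), G (H (Fin.snoc y t)) = Fin.snoc y t := by
    intro y t
    rw [hHsnoc]
    by_cases ht : t = 0
    · subst ht
      rw [if_pos rfl, hGsnoc, hkey, ← heL, e.apply_symm_apply]
    · simp only [if_neg ht]
      rw [hGsnoc, hG1ne _ t ht]
      rw [smul_smul, mul_inv_cancel₀ ht, one_smul, hFr, smul_smul,
        inv_mul_cancel₀ ht, one_smul]
  have hGH : ∀ v, G (H v) = v := by
    intro v
    conv_lhs => rw [← hvsnoc v]
    rw [hGH', hvsnoc]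
  -- H (G v) = v
  have hHG' : ∀ (x : Fin n → ℝ) (t : ℝ), H (G (Fin.snoc x t)) = Fin.snoc x t := by
    intro x t
    rw [hGsnoc, hHsnoc]
    by_cases ht : t = 0
    · subst ht
      rw [hkey, if_pos rfl, ← heL, e.symm_apply_apply]
    · simp only [if_neg ht]
      rw [hG1ne _ t ht, smul_smul, mul_inv_cancel₀ ht, one_smul, hFl,
        smul_smul, inv_mul_cancel₀ ht, one_smul]
  have hHG : ∀ v, H (G v) = v := by
    intro v
    conv_lhs => rw [← hvsnoc v]
    rw [hHG', hvsnoc]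
  have hbijG : Function.Bijective G :=
    ⟨Function.LeftInverse.injective hHG, Function.RightInverse.surjective hGH⟩
  refine ⟨hbijG, ?_⟩
  intro y t ht
  have hcand : G (Fin.snoc (t⁻¹ • Finv (t • y)) t) = Fin.snoc y t := by
    have := hGH (Fin.snoc y t)
    rwa [hHsnoc, if_neg ht] at this
  apply hbijG.injective
  rw [Function.invFun_eq ⟨_, hcand⟩, hcand]

end
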